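/- Let A be a Banach algebra with trivial product, X a Banach A-bimodule with trivial right action, and S : A → X a linear map. If the separating space 𝔖(S) is contained in ann_A X, then the bilinear map (a,b) ↦ a·(Sb), A × A → X, is (jointly) continuous. -/

import Mathlib

def separatingSpace {X Y : Type*} [NormedAddCommGroup X] [NormedAddCommGroup Y]
    (S : X → Y) : Set Y :=
  {y | ∃ x : ℕ → X, Filter.Tendsto x Filter.atTop (nhds 0) ∧
    Filter.Tendsto (fun n => S (x n)) Filter.atTop (nhds y)}

/-- The annihilator of `A` in `X` for a left action `L` (the right action being trivial). -/
def leftAnnihilator {A X : Type*} [NonUnitalNormedRing A] [NormedSpace ℝ A]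
    [NormedAddCommGroup X] [NormedSpace ℝ X] (L : A →L[ℝ] X →L[ℝ] X) : Set X :=
  {x | ∀ a : A, L a x = 0}

open Filter Metric

section Aux

variable {A X : Type*} [NormedAddCommGroup A] [NormedSpace ℝ A]
    [NormedAddCommGroup X] [NormedSpace ℝ X]

/-- The separating space of a linear map, as a submodule. -/
def sepSubmodule (S : A →ₗ[ℝ] X) : Submodule ℝ X where
  carrier := separatingSpace S
  zero_mem' := ⟨fun _ => 0, tendsto_const_nhds, by simpa using tendsto_const_nhds⟩
  add_mem' := by
    rintro y z ⟨x, hx0, hxS⟩ ⟨x', hx0', hxS'⟩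
    refine ⟨fun n => x n + x' n, by simpa using hx0.add hx0', ?_⟩
    simpa [map_add] using hxS.add hxS'
  smul_mem' := by
    rintro c y ⟨x, hx0, hxS⟩
    refine ⟨fun n => c • x n, by simpa using hx0.const_smul c, ?_⟩
    simpa [map_smul] using hxS.const_smul c

lemma sep_absorb (S : A →ₗ[ℝ] X) (v : ℕ → A) (m : ℕ → X) (w : X)
    (hv : Tendsto v atTop (nhds 0)) (hm : ∀ n, m n ∈ separatingSpace S)
    (hw : Tendsto (fun n => S (v n) - m n) atTop (nhds w)) :
    w ∈ separatingSpace S := by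
  have hsel : ∀ n : ℕ, ∃ u : A, ‖u‖ < 1/(n+1 : ℝ) ∧ ‖S u - m n‖ < 1/(n+1 : ℝ) := by
    intro n
    obtain ⟨x, hx0, hxS⟩ := hm n
    have h1 : (0:ℝ) < 1/(n+1 : ℝ) := by positivity
    have e1 := hx0.eventually (Metric.ball_mem_nhds (0:A) h1)
    have e2 := hxS.eventually (Metric.ball_mem_nhds (m n) h1)
    obtain ⟨k, hk1, hk2⟩ := (e1.and e2).exists
    exact ⟨x k, by simpa [mem_ball_zero_iff] using hk1,
      by simpa [Metric.mem_ball, dist_eq_norm] using hk2⟩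
  choose u hu1 hu2 using hsel
  have hlim : Tendsto (fun n : ℕ => 1/(n+1 : ℝ)) atTop (nhds 0) :=
    tendsto_one_div_add_atTop_nhds_zero_nat
  have hu0 : Tendsto u atTop (nhds 0) :=
    squeeze_zero_norm (fun n => (hu1 n).le) hlim
  have hSu0 : Tendsto (fun n => S (u n) - m n) atTop (nhds 0) :=
    squeeze_zero_norm (fun n => (hu2 n).le) hlim
  refine ⟨fun n => v n - u n, by simpa using hv.sub hu0, ?_⟩
  have hkey := hw.sub hSu0
  rw [sub_zero] at hkey
  have heq : (fun n => S (v n - u n)) =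
      fun n => (S (v n) - m n) - (S (u n) - m n) := by
    funext n
    rw [map_sub]
    abel
  rw [heq]
  exact hkey

lemma sep_isClosed (S : A →ₗ[ℝ] X) : IsClosed (separatingSpace S) := by
  refine IsSeqClosed.isClosed ?_
  intro m w hm hw
  have h1 : (-w) ∈ separatingSpace S :=
    sep_absorb S (fun _ => 0) m (-w) tendsto_const_nhds hm (by simpa using hw.neg)
  simpa using (show -(-w) ∈ separatingSpace S from (sepSubmodule S).neg_mem h1)

end Aux

/-- If 𝔖(S) ⊆ ann_A X, then the bilinear map (a,b) ↦ a·(Sb) is jointly continuous. -/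
theorem continuous_coboundary_of_separatingSpace_subset_annihilator
    {A X : Type*} [NonUnitalNormedRing A] [NormedSpace ℝ A] [CompleteSpace A]
    [NormedAddCommGroup X] [NormedSpace ℝ X] [CompleteSpace X]
    (htriv : ∀ a b : A, a * b = 0)
    (L : A →L[ℝ] X →L[ℝ] X) (hL : ∀ (a b : A) (x : X), L (a * b) x = L a (L b x))
    (S : A →ₗ[ℝ] X)
    (h : separatingSpace S ⊆ leftAnnihilator L) :
    Continuous fun p : A × A => L p.1 (S p.2) := by
  classical
  set N : Submodule ℝ X := sepSubmodule S with hN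
  haveI hNc : IsClosed (N : Set X) := sep_isClosed S
  set T : A →ₗ[ℝ] X ⧸ N := N.mkQ.comp S with hT
  have key : ∀ v : ℕ → A, ∀ z : X ⧸ N, Tendsto v atTop (nhds 0) →
      Tendsto (fun n => T (v n)) atTop (nhds z) → z = 0 := by
    intro v z hv hz
    obtain ⟨w, rfl⟩ := Submodule.Quotient.mk_surjective N z
    have hnorm : Tendsto
        (fun n => ‖(Submodule.Quotient.mk (S (v n) - w) : X ⧸ N)‖) atTop (nhds 0) := by
      have h0 : Tendsto (fun n => T (v n) - Submodule.Quotient.mk w) atTop (nhds 0) := by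
        simpa using hz.sub_const (Submodule.Quotient.mk w)
      have h1 := h0.norm
      rw [norm_zero] at h1
      have heq : (fun n => ‖(Submodule.Quotient.mk (S (v n) - w) : X ⧸ N)‖) =
          fun n => ‖T (v n) - Submodule.Quotient.mk w‖ := by
        funext n
        congr 1
      rw [heq]
      exact h1
    have hsel : ∀ n : ℕ, ∃ p : X,
        (Submodule.Quotient.mk p : X ⧸ N) = Submodule.Quotient.mk (S (v n) - w) ∧
        ‖p‖ < ‖(Submodule.Quotient.mk (S (v n) - w) : X ⧸ N)‖ + 1/(n+1 : ℝ) :=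
      fun n => Submodule.Quotient.norm_mk_lt _ (by positivity)
    choose p hp1 hp2 using hsel
    have hlim : Tendsto (fun n : ℕ => 1/(n+1 : ℝ)) atTop (nhds 0) :=
      tendsto_one_div_add_atTop_nhds_zero_nat
    have hp0 : Tendsto p atTop (nhds 0) := by
      refine squeeze_zero_norm (fun n => (hp2 n).le) ?_
      simpa using hnorm.add hlim
    have hmem : ∀ n, S (v n) - w - p n ∈ separatingSpace S := by
      intro n
      have h1 : p n - (S (v n) - w) ∈ N := (Submodule.Quotient.eq N).mp (hp1 n)
      have h2 : -(p n - (S (v n) - w)) ∈ N := N.neg_mem h1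
      have : S (v n) - w - p n = -(p n - (S (v n) - w)) := by abel
      rw [this]
      exact h2
    have hwmem : w ∈ separatingSpace S := by
      refine sep_absorb S v (fun n => S (v n) - w - p n) w hv hmem ?_
      have h0 : Tendsto (fun n => w + p n) atTop (nhds w) := by
        simpa using (tendsto_const_nhds (x := w) (f := atTop)).add hp0
      have heq : (fun n => S (v n) - (S (v n) - w - p n)) = fun n => w + p n := by
        funext n; abel
      rw [heq]
      exact h0
    exact (Submodule.Quotient.mk_eq_zero N).mpr hwmem
  have hTcont : Continuous T := by
    apply T.continuous_of_seq_closed_graph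
    intro u x y hu huy
    have h0 : Tendsto (fun n => u n - x) atTop (nhds 0) := by
      simpa using hu.sub_const x
    have h1 : Tendsto (fun n => T (u n - x)) atTop (nhds (y - T x)) := by
      have := huy.sub_const (T x)
      simpa [map_sub] using this
    have h2 := key _ _ h0 h1
    exact sub_eq_zero.mp h2
  let Tc : A →L[ℝ] X ⧸ N := ⟨T, hTcont⟩
  have hb : ∀ a b : A, ‖L a (S b)‖ ≤ (‖L‖ * ‖Tc‖) * ‖a‖ * ‖b‖ := by
    intro a b
    have h1 : ‖L a (S b)‖ ≤ ‖L a‖ * ‖Tc b‖ := by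
      refine le_of_forall_pos_le_add fun ε hε => ?_
      have hδpos : 0 < ε / (‖L a‖ + 1) := by positivity
      obtain ⟨m', hm'1, hm'2⟩ := Submodule.Quotient.norm_mk_lt (Tc b) hδpos
      have hm'eq : (Submodule.Quotient.mk m' : X ⧸ N) = Submodule.Quotient.mk (S b) := by
        simpa [Tc, hT] using hm'1
      have hmem : S b - m' ∈ separatingSpace S := by
        have h2 : m' - S b ∈ N := (Submodule.Quotient.eq N).mp hm'eq
        have h3 : -(m' - S b) ∈ N := N.neg_mem h2
        simpa [neg_sub] using (show -(m' - S b) ∈ separatingSpace S from h3)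
      have heq : L a (S b) = L a m' := by
        have h0 : L a (S b - m') = 0 := h hmem a
        rw [map_sub] at h0
        linear_combination (norm := module) h0
      have hmul : ‖L a‖ * (ε / (‖L a‖ + 1)) ≤ ε := by
        have hle : ‖L a‖ ≤ ‖L a‖ + 1 := by linarith
        have h4 : ‖L a‖ * (ε / (‖L a‖ + 1)) ≤ (‖L a‖ + 1) * (ε / (‖L a‖ + 1)) :=
          mul_le_mul_of_nonneg_right hle hδpos.le
        have h5 : (‖L a‖ + 1) * (ε / (‖L a‖ + 1)) = ε := by
          field_simp
        linarith
      calc ‖L a (S b)‖ = ‖L a m'‖ := by rw [heq]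
        _ ≤ ‖L a‖ * ‖m'‖ := (L a).le_opNorm m'
        _ ≤ ‖L a‖ * (‖Tc b‖ + ε / (‖L a‖ + 1)) :=
            mul_le_mul_of_nonneg_left hm'2.le (norm_nonneg _)
        _ = ‖L a‖ * ‖Tc b‖ + ‖L a‖ * (ε / (‖L a‖ + 1)) := by ring
        _ ≤ ‖L a‖ * ‖Tc b‖ + ε := by linarith
    calc ‖L a (S b)‖ ≤ ‖L a‖ * ‖Tc b‖ := h1
      _ ≤ (‖L‖ * ‖a‖) * (‖Tc‖ * ‖b‖) := by
          refine mul_le_mul (L.le_opNorm a) (Tc.le_opNorm b) (norm_nonneg _) ?_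
          positivity
      _ = (‖L‖ * ‖Tc‖) * ‖a‖ * ‖b‖ := by ring
  let B : A →ₗ[ℝ] A →ₗ[ℝ] X :=
    { toFun := fun a => ((L a).toLinearMap).comp S
      map_add' := fun a a' => by ext b; simp
      map_smul' := fun c a => by ext b; simp }
  let Bc : A →L[ℝ] A →L[ℝ] X := LinearMap.mkContinuous₂ B (‖L‖ * ‖Tc‖) hb
  have hcont := Bc.continuous₂
  exact hcont
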